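/- Let P, Q, R, S be real numbers with R > 0 and S > 0. If P·cos(Sw)·sin(Rw) + Q·cos(Rw)·sin(Sw) → 0 as w → ∞, then P·cos(Sw)·sin(Rw) + Q·cos(Rw)·sin(Sw) = 0 for all real w. -/

import Mathlib

open Real Filter

/-- derivative helper: generic 4-term trig polynomial -/
private lemma hdgen (A B C D α β : ℝ) (w : ℝ) :
    HasDerivAt (fun w : ℝ => A * Real.sin (α*w) + B * Real.cos (α*w)
      + (C * Real.sin (β*w) + D * Real.cos (β*w)))
    ((-(B*α)) * Real.sin (α*w) + (A*α) * Real.cos (α*w)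
      + ((-(D*β)) * Real.sin (β*w) + (C*β) * Real.cos (β*w))) w := by
  have hs1 : HasDerivAt (fun w : ℝ => Real.sin (α*w)) (Real.cos (α*w) * α) w :=
    (Real.hasDerivAt_sin (α*w)).comp w (by simpa using (hasDerivAt_id w).const_mul α)
  have hc1 : HasDerivAt (fun w : ℝ => Real.cos (α*w)) (-Real.sin (α*w) * α) w :=
    (Real.hasDerivAt_cos (α*w)).comp w (by simpa using (hasDerivAt_id w).const_mul α)
  have hs2 : HasDerivAt (fun w : ℝ => Real.sin (β*w)) (Real.cos (β*w) * β) w :=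
    (Real.hasDerivAt_sin (β*w)).comp w (by simpa using (hasDerivAt_id w).const_mul β)
  have hc2 : HasDerivAt (fun w : ℝ => Real.cos (β*w)) (-Real.sin (β*w) * β) w :=
    (Real.hasDerivAt_cos (β*w)).comp w (by simpa using (hasDerivAt_id w).const_mul β)
  have := ((hs1.const_mul A).add (hc1.const_mul B)).add
    ((hs2.const_mul C).add (hc2.const_mul D))
  refine this.congr_deriv ?_
  ring

private lemma deriv_step {f f' : ℝ → ℝ} (hf : ∀ w, f w = 0)
    (h : ∀ w, HasDerivAt f (f' w) w) : ∀ w, f' w = 0 := by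
  intro w
  have h0 : HasDerivAt (fun _ : ℝ => (0:ℝ)) (f' w) w :=
    (h w).congr_of_eventuallyEq (by filter_upwards with x; rw [hf])
  exact h0.unique (hasDerivAt_const w 0)

private lemma key (a b α β : ℝ) (hβ : 0 ≤ β) (hαβ : β < α)
    (h : Tendsto (fun w : ℝ => a * Real.sin (α*w) + b * Real.sin (β*w)) atTop (nhds 0)) :
    ∀ w : ℝ, a * Real.sin (α*w) + b * Real.sin (β*w) = 0 := by
  -- compactness: subsequence along which all four rotation coordinates converge
  set x : ℕ → (ℝ × ℝ) × (ℝ × ℝ) := fun n =>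
    ((Real.cos (α*n), Real.sin (α*n)), (Real.cos (β*n), Real.sin (β*n))) with hxdef
  have hx : ∀ n, x n ∈ Set.Icc (((-1:ℝ),(-1:ℝ)),((-1:ℝ),(-1:ℝ))) (((1:ℝ),(1:ℝ)),((1:ℝ),(1:ℝ))) := by
    intro n
    simp [x, Set.mem_Icc, Prod.le_def, Real.neg_one_le_sin, Real.sin_le_one,
      Real.neg_one_le_cos, Real.cos_le_one]
  obtain ⟨⟨⟨c₁, s₁⟩, ⟨c₂, s₂⟩⟩, -, φ, hφ, hlim⟩ := isCompact_Icc.tendsto_subseq hx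
  have hcos1 : Tendsto (fun n => Real.cos (α * φ n)) atTop (nhds c₁) :=
    ((continuous_fst.comp continuous_fst).tendsto _).comp hlim
  have hsin1 : Tendsto (fun n => Real.sin (α * φ n)) atTop (nhds s₁) :=
    ((continuous_snd.comp continuous_fst).tendsto _).comp hlim
  have hcos2 : Tendsto (fun n => Real.cos (β * φ n)) atTop (nhds c₂) :=
    ((continuous_fst.comp continuous_snd).tendsto _).comp hlim
  have hsin2 : Tendsto (fun n => Real.sin (β * φ n)) atTop (nhds s₂) :=
    ((continuous_snd.comp continuous_snd).tendsto _).comp hlim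
  have hone1 : c₁^2 + s₁^2 = 1 := by
    have t1 : Tendsto (fun n => Real.cos (α * φ n)^2 + Real.sin (α * φ n)^2)
        atTop (nhds (c₁^2 + s₁^2)) := (hcos1.pow 2).add (hsin1.pow 2)
    have t2 : Tendsto (fun n => Real.cos (α * φ n)^2 + Real.sin (α * φ n)^2)
        atTop (nhds 1) := by
      apply tendsto_const_nhds.congr
      intro n
      rw [add_comm]
      exact (Real.sin_sq_add_cos_sq (α * φ n)).symm
    exact tendsto_nhds_unique t1 t2
  have hone2 : c₂^2 + s₂^2 = 1 := by
    have t1 : Tendsto (fun n => Real.cos (β * φ n)^2 + Real.sin (β * φ n)^2)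
        atTop (nhds (c₂^2 + s₂^2)) := (hcos2.pow 2).add (hsin2.pow 2)
    have t2 : Tendsto (fun n => Real.cos (β * φ n)^2 + Real.sin (β * φ n)^2)
        atTop (nhds 1) := by
      apply tendsto_const_nhds.congr
      intro n
      rw [add_comm]
      exact (Real.sin_sq_add_cos_sq (β * φ n)).symm
    exact tendsto_nhds_unique t1 t2
  -- the translated limit identity
  have hid : ∀ w : ℝ, (a*c₁) * Real.sin (α*w) + (a*s₁) * Real.cos (α*w)
      + ((b*c₂) * Real.sin (β*w) + (b*s₂) * Real.cos (β*w)) = 0 := by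
    intro w
    have hseq : Tendsto (fun n : ℕ => w + (φ n : ℝ)) atTop atTop :=
      tendsto_atTop_add_const_left _ w (tendsto_natCast_atTop_atTop.comp hφ.tendsto_atTop)
    have h1 : Tendsto (fun n : ℕ => a * Real.sin (α*(w + φ n)) + b * Real.sin (β*(w + φ n)))
        atTop (nhds 0) := h.comp hseq
    have h2 : Tendsto (fun n : ℕ => a * Real.sin (α*(w + φ n)) + b * Real.sin (β*(w + φ n)))
        atTop (nhds ((a*c₁) * Real.sin (α*w) + (a*s₁) * Real.cos (α*w)
      + ((b*c₂) * Real.sin (β*w) + (b*s₂) * Real.cos (β*w)))) := by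
      have t := ((hcos1.const_mul (a * Real.sin (α*w))).add
          (hsin1.const_mul (a * Real.cos (α*w)))).add
        ((hcos2.const_mul (b * Real.sin (β*w))).add
          (hsin2.const_mul (b * Real.cos (β*w))))
      have heq : ∀ n : ℕ, a * Real.sin (α*w) * Real.cos (α * φ n)
          + a * Real.cos (α*w) * Real.sin (α * φ n)
          + (b * Real.sin (β*w) * Real.cos (β * φ n)
          + b * Real.cos (β*w) * Real.sin (β * φ n))
          = a * Real.sin (α*(w + φ n)) + b * Real.sin (β*(w + φ n)) := by
        intro n
        rw [mul_add α w, mul_add β w, Real.sin_add, Real.sin_add]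
        ring
      have := t.congr heq
      convert this using 2
      ring
    exact (tendsto_nhds_unique h1 h2).symm
  -- extract coefficients via derivatives at 0
  set A := a*c₁; set B := a*s₁; set C := b*c₂; set D := b*s₂
  have hd1 := deriv_step hid (hdgen A B C D α β)
  have hd2 := deriv_step hd1 (hdgen (-(B*α)) (A*α) (-(D*β)) (C*β) α β)
  have hd3 := deriv_step hd2 (hdgen (-(A*α*α)) (-(B*α)*α) (-(C*β*β)) (-(D*β)*β) α β)
  have e0 := hid 0
  have e1 := hd1 0
  have e2 := hd2 0
  have e3 := hd3 0
  simp [Real.sin_zero, Real.cos_zero] at e0 e1 e2 e3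
  -- e0 : B + D = 0 (up to form), e1 : A*α + C*β = 0, etc.
  have hα : (0:ℝ) < α := lt_of_le_of_lt hβ hαβ
  have hαβ2 : β^2 < α^2 := by nlinarith
  have hne : α^2 - β^2 ≠ 0 := ne_of_gt (by linarith)
  have hA : A = 0 := by
    have hAα : A * α * (α^2 - β^2) = 0 := by
      linear_combination (-1 : ℝ) * e3 - β^2 * e1
    rcases mul_eq_zero.mp hAα with h' | h'
    · rcases mul_eq_zero.mp h' with h'' | h''
      · exact h''
      · exact absurd h'' hα.ne'
    · exact absurd h' hne
  have hCβ : C * β = 0 := by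
    rw [hA] at e1; linarith
  have hB : B = 0 := by
    have hB' : B * (α^2 - β^2) = 0 := by
      linear_combination (-1 : ℝ) * e2 - β^2 * e0
    rcases mul_eq_zero.mp hB' with h' | h'
    · exact h'
    · exact absurd h' hne
  have hD : D = 0 := by rw [hB] at e0; linarith
  have ha : a = 0 := by
    have h' : a = c₁ * A + s₁ * B := by
      simp only [A, B]; linear_combination (-a) * hone1
    rw [h', hA, hB]; ring
  have hbβ : b * β = 0 := by
    have h' : b * β = c₂ * (C * β) + s₂ * (D * β) := by
      simp only [C, D]; linear_combination (-(b*β)) * hone2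
    rw [h', hCβ, hD]; ring
  intro w
  rcases mul_eq_zero.mp hbβ with hb | hβ0
  · rw [ha, hb]; ring
  · rw [ha, hβ0]; simp

theorem trig_limit_vanish (P Q R S : ℝ) (hR : R > 0) (hS : S > 0)
    (h : Tendsto (fun w : ℝ => P * Real.cos (S * w) * Real.sin (R * w)
        + Q * Real.cos (R * w) * Real.sin (S * w)) atTop (nhds 0)) :
    ∀ w : ℝ, P * Real.cos (S * w) * Real.sin (R * w)
        + Q * Real.cos (R * w) * Real.sin (S * w) = 0 := by
  rcases le_total S R with hRS | hRS
  · have hid : ∀ w : ℝ, P * Real.cos (S * w) * Real.sin (R * w)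
        + Q * Real.cos (R * w) * Real.sin (S * w)
        = ((P+Q)/2) * Real.sin ((R+S)*w) + ((P-Q)/2) * Real.sin ((R-S)*w) := by
      intro w
      rw [add_mul, sub_mul, Real.sin_add, Real.sin_sub]
      ring
    have h' : Tendsto (fun w : ℝ => ((P+Q)/2) * Real.sin ((R+S)*w)
        + ((P-Q)/2) * Real.sin ((R-S)*w)) atTop (nhds 0) :=
      h.congr (fun w => hid w)
    have hk := key ((P+Q)/2) ((P-Q)/2) (R+S) (R-S) (by linarith) (by linarith) h'
    intro w
    rw [hid w]
    exact hk w
  · have hid : ∀ w : ℝ, P * Real.cos (S * w) * Real.sin (R * w)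
        + Q * Real.cos (R * w) * Real.sin (S * w)
        = ((P+Q)/2) * Real.sin ((R+S)*w) + ((Q-P)/2) * Real.sin ((S-R)*w) := by
      intro w
      rw [add_mul, sub_mul, Real.sin_add, Real.sin_sub]
      ring
    have h' : Tendsto (fun w : ℝ => ((P+Q)/2) * Real.sin ((R+S)*w)
        + ((Q-P)/2) * Real.sin ((S-R)*w)) atTop (nhds 0) :=
      h.congr (fun w => hid w)
    have hk := key ((P+Q)/2) ((Q-P)/2) (R+S) (S-R) (by linarith) (by linarith) h'
    intro w
    rw [hid w]
    exact hk w
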